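/- Let (Eₙ) be a sequence of locally convex spaces and for each n let Cₙ ⊆ Eₙ be a compact convex set having convex countable tightness. Then the product ∏ₙ Cₙ has convex countable tightness in ∏ₙ Eₙ. -/

import Mathlib

open Set Filter Topology

/-- A convex set `C` in a topological vector space has *convex countable tightness* if
for every convex `D ⊆ C` and every `x` in the closure of `D` there is a countable
`D₀ ⊆ D` with `x` in the closure of `D₀`. -/
def ConvexCountableTightness {E : Type*} [AddCommGroup E] [Module ℝ E]
    [TopologicalSpace E] (C : Set E) : Prop :=
  ∀ D ⊆ C, Convex ℝ D → ∀ x ∈ closure D,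
    ∃ D₀ ⊆ D, D₀.Countable ∧ x ∈ closure D₀

section Aux

set_option linter.unusedSectionVars false

/-- If `T` lives in a compact rectangle and `x` is in the closure of the first-coordinate
projection of `T`, then some point `(x, b)` lies in the closure of `T`. -/
lemma aux_exists_closure_prod_point {X Y : Type*} [TopologicalSpace X] [TopologicalSpace Y]
    {K₁ : Set X} {K₂ : Set Y} (hc : IsCompact (K₁ ×ˢ K₂))
    {T : Set (X × Y)} (hT : T ⊆ K₁ ×ˢ K₂) {x : X}
    (hx : x ∈ closure (Prod.fst '' T)) :
    ∃ b ∈ K₂, b ∈ closure (Prod.snd '' T) ∧ (x, b) ∈ closure T := by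
  set F := Filter.comap Prod.fst (𝓝 x) ⊓ 𝓟 T with hF
  have hFne : F.NeBot := by
    rw [hF, Filter.inf_principal_neBot_iff]
    intro U hU
    obtain ⟨N, hN, hNU⟩ := hU
    obtain ⟨a, haN, t, htT, hta⟩ := mem_closure_iff_nhds.mp hx N hN
    exact ⟨t, hNU (by simp [hta, haN]), htT⟩
  have hle : F ≤ 𝓟 (K₁ ×ˢ K₂) := le_trans inf_le_right (principal_mono.2 hT)
  obtain ⟨p, hpK, hp⟩ := hc hle
  have hpT : p ∈ closure T := mem_closure_iff_clusterPt.2 (hp.mono inf_le_right)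
  refine ⟨p.2, hpK.2, image_closure_subset_closure_image continuous_snd
    (mem_image_of_mem _ hpT), ?_⟩
  rw [mem_closure_iff_nhds]
  intro N' hN'
  rw [mem_nhds_prod_iff] at hN'
  obtain ⟨N, hN, M, hM, hsub⟩ := hN'
  have h1 : (univ ×ˢ M : Set (X × Y)) ∈ 𝓝 p := prod_mem_nhds univ_mem hM
  have h2 : (Prod.fst ⁻¹' N ∩ T) ∈ F :=
    inter_mem (mem_inf_of_left (preimage_mem_comap hN)) (mem_inf_of_right (mem_principal_self T))
  have hne : ((univ ×ˢ M) ∩ (Prod.fst ⁻¹' N ∩ T)).Nonempty := by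
    have hcp : ClusterPt p F := hp
    rw [clusterPt_iff_nonempty] at hcp
    exact hcp h1 h2
  obtain ⟨q, ⟨-, hqM⟩, hqN, hqT⟩ := hne
  exact ⟨q, hsub ⟨hqN, hqM⟩, hqT⟩

/-- Convex countable tightness transfers along linear homeomorphisms. -/
lemma ConvexCountableTightness.of_image {E F : Type*} [AddCommGroup E] [Module ℝ E]
    [TopologicalSpace E] [AddCommGroup F] [Module ℝ F] [TopologicalSpace F]
    (φ : E →ₗ[ℝ] F) (ψ : F →ₗ[ℝ] E) (hφ : Continuous φ) (hψ : Continuous ψ)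
    (h1 : ∀ x, φ (ψ x) = x) (h2 : ∀ x, ψ (φ x) = x)
    {C : Set E} (h : ConvexCountableTightness C) :
    ConvexCountableTightness (φ '' C) := by
  intro D hD hDconv x hx
  have hsub : ψ '' D ⊆ C := by
    rintro _ ⟨d, hd, rfl⟩
    obtain ⟨c, hc, rfl⟩ := hD hd
    rw [h2]; exact hc
  obtain ⟨D₀, hD₀sub, hD₀c, hmem⟩ := h (ψ '' D) hsub (hDconv.linear_image ψ) (ψ x)
    (image_closure_subset_closure_image hψ (mem_image_of_mem _ hx))
  refine ⟨φ '' D₀, ?_, hD₀c.image _, ?_⟩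
  · rintro _ ⟨e, he, rfl⟩
    obtain ⟨d, hd, rfl⟩ := hD₀sub he
    rw [h1]; exact hd
  · have hxeq : x = φ (ψ x) := (h1 x).symm
    rw [hxeq]
    exact image_closure_subset_closure_image hφ (mem_image_of_mem _ hmem)

/-- **Binary case.** The product of two compact convex sets with convex countable
tightness has convex countable tightness. -/
lemma convexCountableTightness_prod {E₁ E₂ : Type*}
    [AddCommGroup E₁] [Module ℝ E₁] [TopologicalSpace E₁]
    [IsTopologicalAddGroup E₁] [ContinuousSMul ℝ E₁]
    [AddCommGroup E₂] [Module ℝ E₂] [TopologicalSpace E₂]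
    [IsTopologicalAddGroup E₂] [ContinuousSMul ℝ E₂] [LocallyConvexSpace ℝ E₂]
    {C₁ : Set E₁} {C₂ : Set E₂}
    (hc₁ : IsCompact C₁) (hc₂ : IsCompact C₂) (hv₂ : Convex ℝ C₂)
    (h₁ : ConvexCountableTightness C₁) (h₂ : ConvexCountableTightness C₂) :
    ConvexCountableTightness (C₁ ×ˢ C₂) := by
  rintro D hD hDconv ⟨x, y⟩ hz
  set G : Set E₂ := {b | b ∈ C₂ ∧ ∃ S, S ⊆ D ∧ S.Countable ∧ (x, b) ∈ closure S} with hGdef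
  have hGsub : G ⊆ C₂ := fun b hb => hb.1
  have hGconv : Convex ℝ G := by
    rintro b₁ ⟨hb₁C, S₁, hS₁D, hS₁c, hxb₁⟩ b₂ ⟨hb₂C, S₂, hS₂D, hS₂c, hxb₂⟩ a b ha hb hab
    refine ⟨hv₂ hb₁C hb₂C ha hb hab,
      (fun q : (E₁ × E₂) × (E₁ × E₂) => a • q.1 + b • q.2) '' (S₁ ×ˢ S₂), ?_,
      (hS₁c.prod hS₂c).image _, ?_⟩
    · rintro _ ⟨⟨s₁, s₂⟩, ⟨hs₁, hs₂⟩, rfl⟩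
      exact hDconv (hS₁D hs₁) (hS₂D hs₂) ha hb hab
    · have hcont : Continuous fun q : (E₁ × E₂) × (E₁ × E₂) => a • q.1 + b • q.2 :=
        (continuous_fst.const_smul a).add (continuous_snd.const_smul b)
      have heq : ((x : E₁), a • b₁ + b • b₂) = a • ((x, b₁) : E₁ × E₂) + b • (x, b₂) := by
        rw [Prod.smul_mk, Prod.smul_mk, Prod.mk_add_mk, ← add_smul, hab, one_smul]
      rw [heq]
      have hcl : ((x, b₁), (x, b₂)) ∈ closure (S₁ ×ˢ S₂) := by
        rw [closure_prod_eq]; exact ⟨hxb₁, hxb₂⟩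
      exact image_closure_subset_closure_image hcont (mem_image_of_mem _ hcl)
  have hyG : y ∈ closure G := by
    rw [mem_closure_iff_nhds]
    intro W hW
    obtain ⟨W', hW'mem, hW'closed, hW'sub⟩ := exists_mem_nhds_isClosed_subset hW
    obtain ⟨V, hVmem, hVconv, hVsub⟩ :=
      (locallyConvexSpace_iff_exists_convex_subset ℝ E₂).mp inferInstance y W' hW'mem
    set D' : Set (E₁ × E₂) := D ∩ (univ ×ˢ V) with hD'def
    have hD'conv : Convex ℝ D' := hDconv.inter (convex_univ.prod hVconv)
    have hA'conv : Convex ℝ (Prod.fst '' D') := hD'conv.linear_image (LinearMap.fst ℝ E₁ E₂)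
    have hA'sub : Prod.fst '' D' ⊆ C₁ := by
      rintro _ ⟨d, hd, rfl⟩; exact (hD hd.1).1
    have hxA' : x ∈ closure (Prod.fst '' D') := by
      rw [mem_closure_iff_nhds]
      intro N hN
      obtain ⟨d, ⟨hdN, hdV⟩, hdD⟩ :=
        mem_closure_iff_nhds.mp hz (N ×ˢ V) (prod_mem_nhds hN hVmem)
      exact ⟨d.1, hdN, d, ⟨hdD, mem_univ _, hdV⟩, rfl⟩
    obtain ⟨A₀, hA₀sub, hA₀c, hxA₀⟩ := h₁ (Prod.fst '' D') hA'sub hA'conv x hxA'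
    choose! w hwD' hwfst using fun a (ha : a ∈ A₀) => hA₀sub ha
    set T := w '' A₀ with hTdef
    have hTsub : T ⊆ D' := by rintro _ ⟨a, ha, rfl⟩; exact hwD' a ha
    have hTK : T ⊆ C₁ ×ˢ C₂ := fun t ht => hD (hTsub ht).1
    have hxT : x ∈ closure (Prod.fst '' T) := by
      refine closure_mono (fun a ha => ?_) hxA₀
      exact ⟨w a, mem_image_of_mem w ha, hwfst a ha⟩
    obtain ⟨b, hbC₂, hbcl, hxb⟩ := aux_exists_closure_prod_point (hc₁.prod hc₂) hTK hxT
    have hsndV : Prod.snd '' T ⊆ V := by rintro _ ⟨t, ht, rfl⟩; exact (hTsub ht).2.2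
    refine ⟨b, hW'sub (closure_minimal (hsndV.trans hVsub) hW'closed hbcl),
      hbC₂, T, hTsub.trans inter_subset_left, hA₀c.image w, hxb⟩
  obtain ⟨G₀, hG₀sub, hG₀c, hyG₀⟩ := h₂ G hGsub hGconv y hyG
  choose! S hSsub hSc hScl using fun b (hb : b ∈ G₀) => (hG₀sub hb).2
  refine ⟨⋃ b ∈ G₀, S b, iUnion₂_subset fun b hb => hSsub b hb,
    hG₀c.biUnion fun b hb => hSc b hb, ?_⟩
  have himg : (fun b : E₂ => ((x : E₁), b)) '' G₀ ⊆ closure (⋃ b ∈ G₀, S b) := by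
    rintro _ ⟨b, hb, rfl⟩
    exact closure_mono (subset_biUnion_of_mem hb) (hScl b hb)
  have hcont : Continuous fun b : E₂ => ((x : E₁), b) := continuous_const.prodMk continuous_id
  have hmem : ((x, y) : E₁ × E₂) ∈ closure ((fun b : E₂ => ((x : E₁), b)) '' G₀) :=
    image_closure_subset_closure_image hcont (mem_image_of_mem _ hyG₀)
  exact closure_minimal himg isClosed_closure hmem

variable {E : ℕ → Type*} [∀ n, AddCommGroup (E n)] [∀ n, Module ℝ (E n)]
    [∀ n, TopologicalSpace (E n)]

/-- Appending a last coordinate, as a linear map. -/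
def auxSnocL (n : ℕ) : ((∀ i : Fin n, E i) × E n) →ₗ[ℝ] (∀ i : Fin (n + 1), E i) where
  toFun p := Fin.snoc p.1 p.2
  map_add' p q := by
    funext i
    induction i using Fin.lastCases with
    | last => simp [Fin.snoc_last]
    | cast i => simp [Fin.snoc_castSucc]
  map_smul' c p := by
    funext i
    induction i using Fin.lastCases with
    | last => simp [Fin.snoc_last]
    | cast i => simp [Fin.snoc_castSucc]

/-- Splitting off the last coordinate, as a linear map. -/
def auxUnsnocL (n : ℕ) : (∀ i : Fin (n + 1), E i) →ₗ[ℝ] ((∀ i : Fin n, E i) × E n) where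
  toFun f := (fun i => f i.castSucc, f (Fin.last n))
  map_add' _ _ := rfl
  map_smul' _ _ := rfl

lemma auxSnocL_cont (n : ℕ) : Continuous (auxSnocL (E := E) n) := by
  apply continuous_pi
  intro i
  induction i using Fin.lastCases with
  | last =>
    simpa [auxSnocL, Fin.snoc_last] using
      (continuous_snd : Continuous fun p : (∀ i : Fin n, E i) × E n => p.2)
  | cast i =>
    simp [auxSnocL, Fin.snoc_castSucc]
    exact ((continuous_apply i).comp
        (continuous_fst : Continuous fun p : (∀ i : Fin n, E i) × E n => p.1))

lemma auxUnsnocL_cont (n : ℕ) : Continuous (auxUnsnocL (E := E) n) :=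
  Continuous.prodMk (continuous_pi fun _ => continuous_apply _) (continuous_apply _)

lemma auxSnocL_unsnocL (n : ℕ) (f : ∀ i : Fin (n + 1), E i) :
    auxSnocL n (auxUnsnocL n f) = f := by
  funext i
  induction i using Fin.lastCases with
  | last => simp [auxSnocL, auxUnsnocL, Fin.snoc_last]
  | cast i => simp [auxSnocL, auxUnsnocL, Fin.snoc_castSucc]

lemma auxUnsnocL_snocL (n : ℕ) (p : (∀ i : Fin n, E i) × E n) :
    auxUnsnocL n (auxSnocL n p) = p := by
  refine Prod.ext ?_ ?_
  · funext i; simp [auxSnocL, auxUnsnocL, Fin.snoc_castSucc]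
  · simp [auxSnocL, auxUnsnocL, Fin.snoc_last]

lemma auxSnocL_image (n : ℕ) (C : ∀ m : ℕ, Set (E m)) :
    auxSnocL n '' ((Set.pi Set.univ fun i : Fin n => C i) ×ˢ C n) =
      Set.pi Set.univ fun i : Fin (n + 1) => C i := by
  ext f
  constructor
  · rintro ⟨⟨g, a⟩, ⟨hg, ha⟩, rfl⟩ i -
    induction i using Fin.lastCases with
    | last => simpa [auxSnocL, Fin.snoc_last] using ha
    | cast i => simpa [auxSnocL, Fin.snoc_castSucc] using hg i (mem_univ _)
  · intro hf
    refine ⟨auxUnsnocL n f,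
      ⟨fun i _ => hf i.castSucc (mem_univ _), hf (Fin.last n) (mem_univ _)⟩,
      auxSnocL_unsnocL n f⟩

variable [∀ n, IsTopologicalAddGroup (E n)] [∀ n, ContinuousSMul ℝ (E n)]
    [∀ n, LocallyConvexSpace ℝ (E n)]

/-- Finite products of compact convex sets with convex countable tightness have
convex countable tightness. -/
lemma convexCountableTightness_pi_fin (C : ∀ n, Set (E n))
    (hc : ∀ n, IsCompact (C n)) (hconv : ∀ n, Convex ℝ (C n))
    (hcct : ∀ n, ConvexCountableTightness (C n)) (n : ℕ) :
    ConvexCountableTightness (Set.pi Set.univ fun i : Fin n => C i) := by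
  induction n with
  | zero =>
    intro D hD hDconv x hx
    exact ⟨D, subset_rfl, D.to_countable, hx⟩
  | succ n ih =>
    have key := convexCountableTightness_prod
      (isCompact_univ_pi fun i : Fin n => hc i) (hc n) (hconv n) ih (hcct n)
    have h := key.of_image (auxSnocL n) (auxUnsnocL n) (auxSnocL_cont n) (auxUnsnocL_cont n)
      (auxSnocL_unsnocL n) (auxUnsnocL_snocL n)
    rwa [auxSnocL_image n C] at h

/-- Restriction to the first `n` coordinates, as a linear map. -/
def auxResL (n : ℕ) : (∀ i : ℕ, E i) →ₗ[ℝ] (∀ i : Fin n, E i) where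
  toFun f i := f i
  map_add' _ _ := rfl
  map_smul' _ _ := rfl

end Aux

/-- Let `(Eₙ)` be a sequence of locally convex spaces and for each `n`
let `Cₙ ⊆ Eₙ` be a compact convex set having convex countable tightness. Then the
product `∏ₙ Cₙ` has convex countable tightness in `∏ₙ Eₙ` (with the product topology). -/
theorem convexCountableTightness_pi
    {E : ℕ → Type*} [∀ n, AddCommGroup (E n)] [∀ n, Module ℝ (E n)]
    [∀ n, TopologicalSpace (E n)] [∀ n, IsTopologicalAddGroup (E n)]
    [∀ n, ContinuousSMul ℝ (E n)] [∀ n, LocallyConvexSpace ℝ (E n)]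
    (C : ∀ n, Set (E n))
    (hc : ∀ n, IsCompact (C n)) (hconv : ∀ n, Convex ℝ (C n))
    (hcct : ∀ n, ConvexCountableTightness (C n)) :
    ConvexCountableTightness (Set.pi Set.univ C) := by
  intro D hD hDconv x hx
  have hfin := convexCountableTightness_pi_fin C hc hconv hcct
  have hrescont : ∀ n : ℕ, Continuous (auxResL (E := E) n) :=
    fun n => continuous_pi fun _ => continuous_apply _
  have key : ∀ n : ℕ, ∃ T : Set (∀ i, E i), T ⊆ D ∧ T.Countable ∧
      auxResL n x ∈ closure (auxResL n '' T) := by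
    intro n
    have hrD : auxResL n '' D ⊆ Set.pi Set.univ fun i : Fin n => C i := by
      rintro _ ⟨d, hd, rfl⟩ i -
      exact hD hd i (mem_univ _)
    have hrDconv : Convex ℝ (auxResL n '' D) := hDconv.linear_image _
    have hrx : auxResL n x ∈ closure (auxResL n '' D) :=
      image_closure_subset_closure_image (hrescont n) (mem_image_of_mem _ hx)
    obtain ⟨S, hSsub, hSc, hScl⟩ := hfin n (auxResL n '' D) hrD hrDconv _ hrx
    choose! t htD htr using fun s (hs : s ∈ S) => hSsub hs
    refine ⟨t '' S, ?_, hSc.image t, ?_⟩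
    · rintro _ ⟨s, hs, rfl⟩; exact htD s hs
    · refine closure_mono (fun s hs => ?_) hScl
      exact ⟨t s, mem_image_of_mem t hs, htr s hs⟩
  choose T hTsub hTc hTcl using key
  refine ⟨⋃ n, T n, iUnion_subset hTsub, countable_iUnion hTc, ?_⟩
  rw [mem_closure_iff_nhds]
  intro N hN
  rw [nhds_pi, Filter.mem_pi] at hN
  obtain ⟨I, hIfin, V, hV, hVsub⟩ := hN
  obtain ⟨m, hm⟩ := hIfin.bddAbove
  set n := m + 1 with hn
  have hΩ : (Set.pi {i : Fin n | (i : ℕ) ∈ I} fun i : Fin n => V i) ∈ 𝓝 (auxResL n x) := by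
    refine set_pi_mem_nhds (Set.toFinite _) fun i _ => ?_
    exact hV i
  obtain ⟨g, hgΩ, s, hsT, hgs⟩ := mem_closure_iff_nhds.mp (hTcl n) _ hΩ
  refine ⟨s, ?_, mem_iUnion.2 ⟨n, hsT⟩⟩
  apply hVsub
  intro i hiI
  have hilt : i < n := Nat.lt_succ_of_le (hm hiI)
  have : auxResL n s ⟨i, hilt⟩ ∈ V i := by
    rw [hgs]
    exact hgΩ ⟨i, hilt⟩ hiI
  exact this
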